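/- arXiv:2604.20394 — 8 statements merged into one kernel-verified Lean document; each statement's English description precedes it below -/
import Mathlib

section
/- Let 0 ≤ j < j' ≤ N be two splits and let b = #{i : j < x_i ≤ j'} be the number of data points with feature value in (j, j']. Then |L(j') − L(j)| ≤ b·M²/m. -/
open Finset

/-- Sum of squared errors of the data points whose feature value lies in the range `R`. -/
noncomputable def SSE (m : ℕ) (x : Fin m → ℕ) (y : Fin m → ℝ) (R : Finset ℕ) : ℝ :=
  let idx := Finset.univ.filter fun i => x i ∈ R
  if idx.Nonempty then
    (∑ i ∈ idx, (y i) ^ 2) - (∑ i ∈ idx, y i) ^ 2 / (idx.card : ℝ)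
  else 0

/-- Mean squared loss of split `j ∈ {0,…,N}`. -/
noncomputable def L (m N : ℕ) (x : Fin m → ℕ) (y : Fin m → ℝ) (j : ℕ) : ℝ :=
  (1 / m : ℝ) * (SSE m x y (Finset.Icc 1 j) + SSE m x y (Finset.Icc (j + 1) N))

/-- Abstract SSE over an index set. -/
noncomputable def sseF {m : ℕ} (y : Fin m → ℝ) (s : Finset (Fin m)) : ℝ :=
  if s.Nonempty then (∑ i ∈ s, (y i) ^ 2) - (∑ i ∈ s, y i) ^ 2 / (s.card : ℝ) else 0

lemma SSE_eq_sseF (m : ℕ) (x : Fin m → ℕ) (y : Fin m → ℝ) (R : Finset ℕ) :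
    SSE m x y R = sseF y (Finset.univ.filter fun i => x i ∈ R) := rfl

lemma sum_sq_expand {m : ℕ} (y : Fin m → ℝ) (s : Finset (Fin m)) (c : ℝ) :
    ∑ i ∈ s, (y i - c) ^ 2
      = (∑ i ∈ s, (y i) ^ 2) - 2 * c * (∑ i ∈ s, y i) + (s.card : ℝ) * c ^ 2 := by
  have : ∀ i ∈ s, (y i - c) ^ 2 = (y i) ^ 2 - 2 * c * y i + c ^ 2 := fun i _ => by ring
  rw [Finset.sum_congr rfl this]
  simp [Finset.sum_add_distrib, Finset.sum_sub_distrib, Finset.mul_sum, Finset.sum_mul, mul_comm]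

lemma sseF_le {m : ℕ} (y : Fin m → ℝ) (s : Finset (Fin m)) (c : ℝ) :
    sseF y s ≤ ∑ i ∈ s, (y i - c) ^ 2 := by
  unfold sseF
  split_ifs with h
  · have hn : (0 : ℝ) < (s.card : ℝ) := by
      exact_mod_cast Finset.card_pos.mpr h
    rw [sum_sq_expand]
    have hdiv : (∑ i ∈ s, y i) ^ 2 / (s.card : ℝ) * (s.card : ℝ) = (∑ i ∈ s, y i) ^ 2 :=
      div_mul_cancel₀ _ (ne_of_gt hn)
    nlinarith [sq_nonneg ((s.card : ℝ) * c - ∑ i ∈ s, y i)]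
  · positivity

lemma sseF_eq_mean {m : ℕ} (y : Fin m → ℝ) (s : Finset (Fin m)) (h : s.Nonempty) :
    sseF y s = ∑ i ∈ s, (y i - (∑ i ∈ s, y i) / (s.card : ℝ)) ^ 2 := by
  have hn : (0 : ℝ) < (s.card : ℝ) := by exact_mod_cast Finset.card_pos.mpr h
  rw [sum_sq_expand, sseF, if_pos h]
  field_simp
  ring

lemma sseF_nonneg {m : ℕ} (y : Fin m → ℝ) (s : Finset (Fin m)) : 0 ≤ sseF y s := by
  by_cases h : s.Nonempty
  · rw [sseF_eq_mean y s h]; positivity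
  · rw [sseF, if_neg h]

lemma sseF_mono {m : ℕ} (y : Fin m → ℝ) {s t : Finset (Fin m)} (hst : s ⊆ t) :
    sseF y s ≤ sseF y t := by
  by_cases hs : s.Nonempty
  · have ht : t.Nonempty := hs.mono hst
    calc sseF y s ≤ ∑ i ∈ s, (y i - (∑ i ∈ t, y i) / (t.card : ℝ)) ^ 2 := sseF_le y s _
      _ ≤ ∑ i ∈ t, (y i - (∑ i ∈ t, y i) / (t.card : ℝ)) ^ 2 :=
          Finset.sum_le_sum_of_subset_of_nonneg hst (fun i _ _ => by positivity)
      _ = sseF y t := (sseF_eq_mean y t ht).symm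
  · rw [sseF, if_neg hs]; exact sseF_nonneg y t

lemma sseF_upper {m : ℕ} (y : Fin m → ℝ) (M : ℝ) (hy : ∀ i, y i ∈ Set.Icc (0 : ℝ) M)
    {s t : Finset (Fin m)} (hst : s ⊆ t) :
    sseF y t ≤ sseF y s + ((t \ s).card : ℝ) * M ^ 2 := by
  have hyM : ∀ i, 0 ≤ y i ∧ y i ≤ M := fun i => ⟨(hy i).1, (hy i).2⟩
  by_cases hs : s.Nonempty
  · set μ := (∑ i ∈ s, y i) / (s.card : ℝ) with hμ
    have hn : (0 : ℝ) < (s.card : ℝ) := by exact_mod_cast Finset.card_pos.mpr hs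
    have hμ0 : 0 ≤ μ := by
      apply div_nonneg _ (le_of_lt hn)
      exact Finset.sum_nonneg fun i _ => (hyM i).1
    have hμM : μ ≤ M := by
      rw [hμ, div_le_iff₀ hn]
      calc ∑ i ∈ s, y i ≤ ∑ i ∈ s, M := Finset.sum_le_sum fun i _ => (hyM i).2
        _ = (s.card : ℝ) * M := by rw [Finset.sum_const, nsmul_eq_mul]
        _ = M * (s.card : ℝ) := by ring
    have hsplit : ∑ i ∈ t, (y i - μ) ^ 2
        = ∑ i ∈ s, (y i - μ) ^ 2 + ∑ i ∈ t \ s, (y i - μ) ^ 2 := by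
      rw [← Finset.sum_union (Finset.disjoint_sdiff), Finset.union_sdiff_of_subset hst]
    have hbd : ∑ i ∈ t \ s, (y i - μ) ^ 2 ≤ ((t \ s).card : ℝ) * M ^ 2 := by
      calc ∑ i ∈ t \ s, (y i - μ) ^ 2 ≤ ∑ i ∈ t \ s, M ^ 2 :=
            Finset.sum_le_sum fun i _ => by nlinarith [(hyM i).1, (hyM i).2]
        _ = ((t \ s).card : ℝ) * M ^ 2 := by rw [Finset.sum_const, nsmul_eq_mul]
    calc sseF y t ≤ ∑ i ∈ t, (y i - μ) ^ 2 := sseF_le y t μ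
      _ = ∑ i ∈ s, (y i - μ) ^ 2 + ∑ i ∈ t \ s, (y i - μ) ^ 2 := hsplit
      _ ≤ sseF y s + ((t \ s).card : ℝ) * M ^ 2 := by
          rw [sseF_eq_mean y s hs]; exact add_le_add_right hbd _
  · have hse : s = ∅ := Finset.not_nonempty_iff_eq_empty.mp hs
    subst hse
    rw [Finset.sdiff_empty]
    have h0 : sseF y (∅ : Finset (Fin m)) = 0 := by rw [sseF, if_neg (by simp)]
    rw [h0, zero_add]
    calc sseF y t ≤ ∑ i ∈ t, (y i - 0) ^ 2 := sseF_le y t 0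
      _ ≤ ∑ i ∈ t, M ^ 2 := Finset.sum_le_sum fun i _ => by nlinarith [(hyM i).1, (hyM i).2]
      _ = (t.card : ℝ) * M ^ 2 := by rw [Finset.sum_const, nsmul_eq_mul]

/-- Lipschitz property of the squared loss: if `b` data points have feature value in
`(j, j']`, then `|L(j') − L(j)| ≤ b·M²/m`. -/
theorem loss_split_shift (m N : ℕ) (hm : 1 ≤ m) (M : ℝ) (x : Fin m → ℕ) (y : Fin m → ℝ)
    (hx : ∀ i, x i ∈ Finset.Icc 1 N) (hy : ∀ i, y i ∈ Set.Icc (0 : ℝ) M)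
    (j j' : ℕ) (hjj' : j < j') (hj'N : j' ≤ N) :
    |L m N x y j' - L m N x y j| ≤
      ((Finset.univ.filter fun i => j < x i ∧ x i ≤ j').card : ℝ) * M ^ 2 / m := by
  have hxN : ∀ i, 1 ≤ x i ∧ x i ≤ N := fun i => Finset.mem_Icc.mp (hx i)
  set A1 : Finset (Fin m) := Finset.univ.filter (fun i => x i ∈ Finset.Icc 1 j) with hA1
  set T1 : Finset (Fin m) := Finset.univ.filter (fun i => x i ∈ Finset.Icc 1 j') with hT1
  set A2 : Finset (Fin m) := Finset.univ.filter (fun i => x i ∈ Finset.Icc (j' + 1) N) with hA2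
  set T2 : Finset (Fin m) := Finset.univ.filter (fun i => x i ∈ Finset.Icc (j + 1) N) with hT2
  set B : Finset (Fin m) := Finset.univ.filter (fun i => j < x i ∧ x i ≤ j') with hB
  have h1 : A1 ⊆ T1 := by
    rw [hA1, hT1]
    intro i hi
    simp only [Finset.mem_filter, Finset.mem_Icc, Finset.mem_univ, true_and] at hi ⊢
    omega
  have h2 : A2 ⊆ T2 := by
    rw [hA2, hT2]
    intro i hi
    simp only [Finset.mem_filter, Finset.mem_Icc, Finset.mem_univ, true_and] at hi ⊢
    omega
  have hd1 : T1 \ A1 = B := by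
    rw [hA1, hT1, hB]
    ext i
    simp only [Finset.mem_sdiff, Finset.mem_filter, Finset.mem_Icc,
      Finset.mem_univ, true_and]
    have := hxN i
    omega
  have hd2 : T2 \ A2 = B := by
    rw [hA2, hT2, hB]
    ext i
    simp only [Finset.mem_sdiff, Finset.mem_filter, Finset.mem_Icc,
      Finset.mem_univ, true_and]
    have := hxN i
    omega
  have hD1l : 0 ≤ sseF y T1 - sseF y A1 := sub_nonneg.mpr (sseF_mono y h1)
  have hD2l : 0 ≤ sseF y T2 - sseF y A2 := sub_nonneg.mpr (sseF_mono y h2)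
  have hD1u : sseF y T1 - sseF y A1 ≤ (B.card : ℝ) * M ^ 2 := by
    have := sseF_upper y M hy h1
    rw [hd1] at this
    linarith
  have hD2u : sseF y T2 - sseF y A2 ≤ (B.card : ℝ) * M ^ 2 := by
    have := sseF_upper y M hy h2
    rw [hd2] at this
    linarith
  have hLdiff : L m N x y j' - L m N x y j
      = (1 / m : ℝ) * ((sseF y T1 - sseF y A1) - (sseF y T2 - sseF y A2)) := by
    simp only [L, SSE_eq_sseF, hA1, hT1, hA2, hT2]
    ring
  have hm' : (0 : ℝ) < (m : ℝ) := by exact_mod_cast hm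
  rw [hLdiff, abs_mul, abs_of_pos (by positivity : (0:ℝ) < (1/m : ℝ))]
  have habs : |(sseF y T1 - sseF y A1) - (sseF y T2 - sseF y A2)| ≤ (B.card : ℝ) * M ^ 2 := by
    rw [abs_le]
    constructor <;> nlinarith
  calc (1 / m : ℝ) * |(sseF y T1 - sseF y A1) - (sseF y T2 - sseF y A2)|
      ≤ (1 / m : ℝ) * ((B.card : ℝ) * M ^ 2) := by
        apply mul_le_mul_of_nonneg_left habs (by positivity)
    _ = (B.card : ℝ) * M ^ 2 / m := by ring
end

section
/- Re-encode each label y_i ∈ {−1,+1} as z_i = (y_i+1)/2 ∈ {0,1}. Then for every split j ∈ {0,1,...,N}, L_Gini(j) = 2·L_MSE(j), where L_MSE(j) is the mean squared loss of split j computed on the re-encoded dataset (x_i, z_i). Consequently min_j L_Gini(j) = 2·min_j L_MSE(j), and the two objectives have the same set of minimizing splits. -/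
open Finset

/-- Gini loss of a split `j ∈ {0,…,N}` for a dataset with labels in `{-1,+1}`;
a child with no points contributes `0`. -/
noncomputable def giniLoss (m N : ℕ) (x : Fin m → ℕ) (y : Fin m → ℝ) (j : ℕ) : ℝ :=
  let a := ((Finset.univ.filter fun i => x i ∈ Finset.Icc 1 j ∧ y i = 1).card : ℝ)
  let b := ((Finset.univ.filter fun i => x i ∈ Finset.Icc 1 j ∧ y i = -1).card : ℝ)
  let c := ((Finset.univ.filter fun i => x i ∈ Finset.Icc (j + 1) N ∧ y i = 1).card : ℝ)
  let d := ((Finset.univ.filter fun i => x i ∈ Finset.Icc (j + 1) N ∧ y i = -1).card : ℝ)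
  (1 / m : ℝ) * ((if a + b = 0 then 0 else 2 * a * b / (a + b)) +
                 (if c + d = 0 then 0 else 2 * c * d / (c + d)))

/-- Mean squared loss of split `j ∈ {0,…,N}`. -/
noncomputable def mseLoss (m N : ℕ) (x : Fin m → ℕ) (y : Fin m → ℝ) (j : ℕ) : ℝ :=
  (1 / m : ℝ) * (SSE m x y (Finset.Icc 1 j) + SSE m x y (Finset.Icc (j + 1) N))

lemma child_eq (m : ℕ) (x : Fin m → ℕ) (y : Fin m → ℝ) (hy : ∀ i, y i = 1 ∨ y i = -1)
    (R : Finset ℕ) :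
    (if ((Finset.univ.filter fun i => x i ∈ R ∧ y i = 1).card : ℝ)
        + ((Finset.univ.filter fun i => x i ∈ R ∧ y i = -1).card : ℝ) = 0 then 0
     else 2 * ((Finset.univ.filter fun i => x i ∈ R ∧ y i = 1).card : ℝ)
            * ((Finset.univ.filter fun i => x i ∈ R ∧ y i = -1).card : ℝ)
            / (((Finset.univ.filter fun i => x i ∈ R ∧ y i = 1).card : ℝ)
              + ((Finset.univ.filter fun i => x i ∈ R ∧ y i = -1).card : ℝ)))
    = 2 * SSE m x (fun i => (y i + 1) / 2) R := by
  classical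
  set idx := Finset.univ.filter fun i : Fin m => x i ∈ R with hidx
  set A := idx.filter fun i => y i = 1 with hA
  set B := idx.filter fun i => ¬ y i = 1 with hB
  have hAeq : Finset.univ.filter (fun i : Fin m => x i ∈ R ∧ y i = 1) = A := by
    rw [hA, hidx, Finset.filter_filter]
  have hBeq : Finset.univ.filter (fun i : Fin m => x i ∈ R ∧ y i = -1) = B := by
    rw [hB, hidx, Finset.filter_filter]
    apply Finset.filter_congr
    intro i _
    rcases hy i with h | h <;> rw [h] <;> norm_num
  have hcard : A.card + B.card = idx.card := Finset.card_filter_add_card_filter_not _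
  have hz1 : ∀ i ∈ A, (y i + 1) / 2 = 1 := by
    intro i hi; rw [hA, Finset.mem_filter] at hi; rw [hi.2]; norm_num
  have hz0 : ∀ i ∈ B, (y i + 1) / 2 = 0 := by
    intro i hi; rw [hB, Finset.mem_filter] at hi
    rcases hy i with h | h
    · exact absurd h hi.2
    · rw [h]; norm_num
  have hsum : (∑ i ∈ idx, (y i + 1) / 2) = (A.card : ℝ) := by
    rw [← Finset.sum_filter_add_sum_filter_not idx (fun i => y i = 1)]
    rw [Finset.sum_congr rfl hz1, Finset.sum_congr rfl hz0]
    simp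
  have hzz : ∀ i : Fin m, ((y i + 1) / 2) ^ 2 = (y i + 1) / 2 := by
    intro i; rcases hy i with h | h <;> rw [h] <;> norm_num
  have hsumsq : (∑ i ∈ idx, ((y i + 1) / 2) ^ 2) = (A.card : ℝ) := by
    simp only [hzz]; exact hsum
  rw [hAeq, hBeq]
  simp only [SSE, ← hidx]
  by_cases hne : idx.Nonempty
  · have hn : (0:ℝ) < idx.card := by exact_mod_cast Finset.card_pos.mpr hne
    rw [if_pos hne, hsum, hsumsq]
    have hab : (A.card : ℝ) + (B.card : ℝ) = (idx.card : ℝ) := by exact_mod_cast hcard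
    rw [if_neg (by rw [hab]; exact ne_of_gt hn)]
    rw [← hab] at hn ⊢
    field_simp
    ring
  · rw [if_neg hne]
    have : idx = ∅ := Finset.not_nonempty_iff_eq_empty.mp hne
    have hA0 : A = ∅ := by rw [hA, this]; simp
    have hB0 : B = ∅ := by rw [hB, this]; simp
    rw [hA0, hB0]
    norm_num

/-- Re-encoding labels `y ∈ {-1,+1}` as `z = (y+1)/2 ∈ {0,1}`, for every split `j`
we have `L_Gini(j) = 2·L_MSE(j)`; hence the minima agree up to the factor `2` and the
two objectives have the same minimizing splits. -/
theorem gini_eq_two_mse (m N : ℕ) (hm : 1 ≤ m) (x : Fin m → ℕ) (y : Fin m → ℝ)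
    (hx : ∀ i, x i ∈ Finset.Icc 1 N) (hy : ∀ i, y i = 1 ∨ y i = -1) :
    let z : Fin m → ℝ := fun i => (y i + 1) / 2
    let hne : (Finset.Icc 0 N).Nonempty := Finset.nonempty_Icc.mpr (Nat.zero_le N)
    (∀ j ≤ N, giniLoss m N x y j = 2 * mseLoss m N x z j) ∧
    (Finset.Icc 0 N).inf' hne (giniLoss m N x y)
      = 2 * (Finset.Icc 0 N).inf' hne (mseLoss m N x z) ∧
    (∀ j ∈ Finset.Icc 0 N,
      (giniLoss m N x y j = (Finset.Icc 0 N).inf' hne (giniLoss m N x y) ↔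
       mseLoss m N x z j = (Finset.Icc 0 N).inf' hne (mseLoss m N x z))) := by
    classical
  intro z hne
  have key : ∀ j : ℕ, giniLoss m N x y j = 2 * mseLoss m N x z j := by
    intro j
    simp only [giniLoss, mseLoss]
    rw [show z = fun i => (y i + 1) / 2 from rfl]
    rw [child_eq m x y hy (Finset.Icc 1 j), child_eq m x y hy (Finset.Icc (j+1) N)]
    ring
  have hinf : (Finset.Icc 0 N).inf' hne (giniLoss m N x y)
      = 2 * (Finset.Icc 0 N).inf' hne (mseLoss m N x z) := by
    have h1 : (Finset.Icc 0 N).inf' hne (giniLoss m N x y)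
        = (Finset.Icc 0 N).inf' hne (fun j => 2 * mseLoss m N x z j) :=
      Finset.inf'_congr hne rfl (fun j _ => key j)
    rw [h1]
    obtain ⟨j0, hj0, hj0eq⟩ := Finset.exists_mem_eq_inf' hne (mseLoss m N x z)
    apply le_antisymm
    · rw [hj0eq]
      exact Finset.inf'_le _ hj0
    · apply Finset.le_inf'
      intro j hj
      have := Finset.inf'_le (mseLoss m N x z) hj
      linarith
  refine ⟨fun j _ => key j, hinf, ?_⟩
  intro j _
  rw [key j, hinf]
  constructor
  · intro h; linarith
  · intro h; linarith
end

section
/- For any two splits 0 ≤ j < j' ≤ N, letting ℓ = #{i : j < x_i ≤ j'} be the number of data points with feature value in (j, j'], we have |L_Gini(j) − L_Gini(j')| ≤ 2ℓ/m. -/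
open Finset

lemma gini_if_eq (a b : ℝ) :
    (if a + b = 0 then (0:ℝ) else 2 * a * b / (a + b)) = 2 * a * b / (a + b) := by
  split_ifs with h
  · rw [h, div_zero]
  · rfl

lemma G_mono {a b a' b' : ℝ} (ha : 0 ≤ a) (hb : 0 ≤ b) (haa : a ≤ a') (hbb : b ≤ b') :
    2 * a * b / (a + b) ≤ 2 * a' * b' / (a' + b') := by
  rcases eq_or_lt_of_le (by linarith : (0:ℝ) ≤ a + b) with h | h
  · rw [← h, div_zero]
    apply div_nonneg (by nlinarith) (by linarith)
  · have h' : (0:ℝ) < a' + b' := by linarith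
    rw [div_le_div_iff₀ h h']
    nlinarith [mul_nonneg (mul_nonneg ha ha) (sub_nonneg.2 hbb),
      mul_nonneg (mul_nonneg hb hb) (sub_nonneg.2 haa),
      mul_nonneg (sub_nonneg.2 haa) (sub_nonneg.2 hbb)]

lemma G_le_add {a b : ℝ} (ha : 0 ≤ a) (hb : 0 ≤ b) :
    2 * a * b / (a + b) ≤ a + b := by
  rcases eq_or_lt_of_le (by linarith : (0:ℝ) ≤ a + b) with h | h
  · rw [← h, div_zero]
  · rw [div_le_iff₀ h]; nlinarith [sq_nonneg (a - b)]

lemma G_lip {a b p q : ℝ} (ha : 0 ≤ a) (hb : 0 ≤ b) (hp : 0 ≤ p) (hq : 0 ≤ q) :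
    2 * (a + p) * (b + q) / ((a + p) + (b + q)) ≤ 2 * a * b / (a + b) + 2 * p + 2 * q := by
  rcases eq_or_lt_of_le (by linarith : (0:ℝ) ≤ a + b) with h | h
  · have ha0 : a = 0 := by linarith
    have hb0 : b = 0 := by linarith
    subst ha0; subst hb0
    simp only [zero_add, add_zero, mul_zero, zero_mul, zero_div]
    calc 2 * p * q / (p + q) ≤ p + q := G_le_add hp hq
      _ ≤ 2 * p + 2 * q := by linarith
  · have h' : (0:ℝ) < a + p + (b + q) := by linarith
    have key : 2 * a * b / (a + b) + 2 * p + 2 * q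
        = (2 * a * b + (2 * p + 2 * q) * (a + b)) / (a + b) := by
      field_simp
      ring
    rw [key, div_le_div_iff₀ h' h]
    nlinarith [mul_nonneg h.le (mul_nonneg hp ha), mul_nonneg h.le (mul_nonneg hq hb),
      mul_nonneg h.le (mul_nonneg hp hp), mul_nonneg h.le (mul_nonneg hq hq),
      mul_nonneg h.le (mul_nonneg hp hq),
      mul_nonneg (mul_nonneg ha hb) (add_nonneg hp hq)]

lemma card_split {m : ℕ} (P Q R : Fin m → Prop) [DecidablePred P] [DecidablePred Q]
    [DecidablePred R] (h : ∀ i, P i ↔ Q i ∨ R i) (hd : ∀ i, ¬(Q i ∧ R i)) :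
    (Finset.univ.filter P).card = (Finset.univ.filter Q).card + (Finset.univ.filter R).card := by
  rw [← Finset.card_union_of_disjoint]
  · congr 1
    ext i
    simp [h i]
  · rw [Finset.disjoint_left]
    intro i hq hr
    simp only [Finset.mem_filter, Finset.mem_univ, true_and] at hq hr
    exact hd i ⟨hq, hr⟩

/-- Lipschitz property of the Gini loss: if `ℓ` data points have feature value in
`(j, j']`, then `|L_Gini(j) − L_Gini(j')| ≤ 2ℓ/m`. -/
theorem gini_split_shift (m N : ℕ) (hm : 1 ≤ m) (x : Fin m → ℕ) (y : Fin m → ℝ)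
    (hx : ∀ i, x i ∈ Finset.Icc 1 N) (hy : ∀ i, y i = 1 ∨ y i = -1)
    (j j' : ℕ) (hjj' : j < j') (hj'N : j' ≤ N) :
    |giniLoss m N x y j - giniLoss m N x y j'| ≤
      2 * ((Finset.univ.filter fun i => j < x i ∧ x i ≤ j').card : ℝ) / m := by
  -- counts
  set p := ((Finset.univ.filter fun i => (j < x i ∧ x i ≤ j') ∧ y i = 1).card : ℝ) with hp_def
  set q := ((Finset.univ.filter fun i => (j < x i ∧ x i ≤ j') ∧ y i = -1).card : ℝ) with hq_def
  set a := ((Finset.univ.filter fun i => x i ∈ Finset.Icc 1 j ∧ y i = 1).card : ℝ) with ha_def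
  set b := ((Finset.univ.filter fun i => x i ∈ Finset.Icc 1 j ∧ y i = -1).card : ℝ) with hb_def
  set c' := ((Finset.univ.filter fun i => x i ∈ Finset.Icc (j' + 1) N ∧ y i = 1).card : ℝ) with hc'_def
  set d' := ((Finset.univ.filter fun i => x i ∈ Finset.Icc (j' + 1) N ∧ y i = -1).card : ℝ) with hd'_def
  have hy1 : ∀ i, y i = 1 → ¬ y i = -1 := by
    intro i h1 h2; rw [h1] at h2; norm_num at h2
  have hℓ : ((Finset.univ.filter fun i => j < x i ∧ x i ≤ j').card : ℝ) = p + q := by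
    rw [hp_def, hq_def, ← Nat.cast_add, Nat.cast_inj]
    apply card_split
    · intro i
      constructor
      · intro h
        rcases hy i with h' | h'
        · exact Or.inl ⟨h, h'⟩
        · exact Or.inr ⟨h, h'⟩
      · rintro (⟨h, _⟩ | ⟨h, _⟩) <;> exact h
    · rintro i ⟨⟨_, h1⟩, ⟨_, h2⟩⟩
      exact hy1 i h1 h2
  have ha' : ((Finset.univ.filter fun i => x i ∈ Finset.Icc 1 j' ∧ y i = 1).card : ℝ) = a + p := by
    rw [ha_def, hp_def, ← Nat.cast_add, Nat.cast_inj]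
    apply card_split
    · intro i
      have := hx i
      simp only [Finset.mem_Icc] at this ⊢
      constructor
      · rintro ⟨⟨h1, h2⟩, h3⟩
        rcases le_or_gt (x i) j with h | h
        · exact Or.inl ⟨⟨h1, h⟩, h3⟩
        · exact Or.inr ⟨⟨h, h2⟩, h3⟩
      · rintro (⟨⟨h1, h2⟩, h3⟩ | ⟨⟨h1, h2⟩, h3⟩)
        · exact ⟨⟨h1, le_trans h2 (le_of_lt hjj')⟩, h3⟩
        · exact ⟨⟨this.1, h2⟩, h3⟩
    · rintro i ⟨⟨hm1, _⟩, ⟨hm2, _⟩⟩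
      rw [Finset.mem_Icc] at hm1
      omega
  have hb' : ((Finset.univ.filter fun i => x i ∈ Finset.Icc 1 j' ∧ y i = -1).card : ℝ) = b + q := by
    rw [hb_def, hq_def, ← Nat.cast_add, Nat.cast_inj]
    apply card_split
    · intro i
      have := hx i
      simp only [Finset.mem_Icc] at this ⊢
      constructor
      · rintro ⟨⟨h1, h2⟩, h3⟩
        rcases le_or_gt (x i) j with h | h
        · exact Or.inl ⟨⟨h1, h⟩, h3⟩
        · exact Or.inr ⟨⟨h, h2⟩, h3⟩
      · rintro (⟨⟨h1, h2⟩, h3⟩ | ⟨⟨h1, h2⟩, h3⟩)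
        · exact ⟨⟨h1, le_trans h2 (le_of_lt hjj')⟩, h3⟩
        · exact ⟨⟨this.1, h2⟩, h3⟩
    · rintro i ⟨⟨hm1, _⟩, ⟨hm2, _⟩⟩
      rw [Finset.mem_Icc] at hm1
      omega
  have hc : ((Finset.univ.filter fun i => x i ∈ Finset.Icc (j + 1) N ∧ y i = 1).card : ℝ) = c' + p := by
    rw [hc'_def, hp_def, ← Nat.cast_add, Nat.cast_inj]
    apply card_split
    · intro i
      have := hx i
      simp only [Finset.mem_Icc] at this ⊢
      constructor
      · rintro ⟨⟨h1, h2⟩, h3⟩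
        rcases le_or_gt (x i) j' with h | h
        · exact Or.inr ⟨⟨by omega, h⟩, h3⟩
        · exact Or.inl ⟨⟨by omega, h2⟩, h3⟩
      · rintro (⟨⟨h1, h2⟩, h3⟩ | ⟨⟨h1, h2⟩, h3⟩)
        · exact ⟨⟨by omega, h2⟩, h3⟩
        · exact ⟨⟨by omega, this.2⟩, h3⟩
    · rintro i ⟨⟨hm1, _⟩, ⟨hm2, _⟩⟩
      rw [Finset.mem_Icc] at hm1
      omega
  have hd : ((Finset.univ.filter fun i => x i ∈ Finset.Icc (j + 1) N ∧ y i = -1).card : ℝ) = d' + q := by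
    rw [hd'_def, hq_def, ← Nat.cast_add, Nat.cast_inj]
    apply card_split
    · intro i
      have := hx i
      simp only [Finset.mem_Icc] at this ⊢
      constructor
      · rintro ⟨⟨h1, h2⟩, h3⟩
        rcases le_or_gt (x i) j' with h | h
        · exact Or.inr ⟨⟨by omega, h⟩, h3⟩
        · exact Or.inl ⟨⟨by omega, h2⟩, h3⟩
      · rintro (⟨⟨h1, h2⟩, h3⟩ | ⟨⟨h1, h2⟩, h3⟩)
        · exact ⟨⟨by omega, h2⟩, h3⟩
        · exact ⟨⟨by omega, this.2⟩, h3⟩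
    · rintro i ⟨⟨hm1, _⟩, ⟨hm2, _⟩⟩
      rw [Finset.mem_Icc] at hm1
      omega
  -- nonnegativity
  have hpa : (0:ℝ) ≤ a := Nat.cast_nonneg _
  have hpb : (0:ℝ) ≤ b := Nat.cast_nonneg _
  have hpc : (0:ℝ) ≤ c' := Nat.cast_nonneg _
  have hpd : (0:ℝ) ≤ d' := Nat.cast_nonneg _
  have hpp : (0:ℝ) ≤ p := Nat.cast_nonneg _
  have hpq : (0:ℝ) ≤ q := Nat.cast_nonneg _
  -- unfold loss
  rw [hℓ]
  simp only [giniLoss]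
  rw [gini_if_eq, gini_if_eq, gini_if_eq, gini_if_eq, ha', hb', hc, hd]
  have hmpos : (0:ℝ) < m := by exact_mod_cast hm
  have key : |2 * a * b / (a + b) + 2 * (c' + p) * (d' + q) / ((c' + p) + (d' + q))
      - (2 * (a + p) * (b + q) / ((a + p) + (b + q)) + 2 * c' * d' / (c' + d'))| ≤ 2 * (p + q) := by
    rw [abs_le]
    constructor
    · have h1 := G_lip hpa hpb hpp hpq
      have h2 := G_mono hpc hpd (by linarith : c' ≤ c' + p) (by linarith : d' ≤ d' + q)
      linarith
    · have h1 := G_lip hpc hpd hpp hpq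
      have h2 := G_mono hpa hpb (by linarith : a ≤ a + p) (by linarith : b ≤ b + q)
      linarith
  calc |1 / (m:ℝ) * (2 * a * b / (a + b) + 2 * (c' + p) * (d' + q) / ((c' + p) + (d' + q)))
        - 1 / (m:ℝ) * (2 * (a + p) * (b + q) / ((a + p) + (b + q)) + 2 * c' * d' / (c' + d'))|
      = 1 / (m:ℝ) * |2 * a * b / (a + b) + 2 * (c' + p) * (d' + q) / ((c' + p) + (d' + q))
        - (2 * (a + p) * (b + q) / ((a + p) + (b + q)) + 2 * c' * d' / (c' + d'))| := by
        rw [← mul_sub, abs_mul, abs_of_pos (by positivity : (0:ℝ) < 1 / m)]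
    _ ≤ 1 / (m:ℝ) * (2 * (p + q)) := by
        apply mul_le_mul_of_nonneg_left key (by positivity)
    _ = 2 * (p + q) / m := by ring
end

section
/- Let M > 0, β > 0, m ≥ 1 be reals, and let n ≥ 1, s, q be reals with 0 ≤ s ≤ M·n and q ≥ 0. Let a, b, c be reals with 0 ≤ a ≤ βm, 0 ≤ b ≤ βMm, 0 ≤ c ≤ βM²m, and set D = n + a + βm. Then |(q + c − (s + b)²/D) − (q − s²/n)| ≤ 3βM²m. (In words: the estimated sum of squared errors computed from Count–Min overestimates of the count, first moment, and second moment of a range, with the denominator shifted by βm, differs from the true sum of squared errors by at most 3βM²m.) -/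
/-- The estimated SSE computed from Count–Min overestimates `n+a, s+b, q+c` of the count,
first moment, and second moment (denominator shifted by `βm`) differs from the true SSE
`q − s²/n` by at most `3βM²m`. -/
theorem sse_estimate_error (M β m n s q a b c : ℝ)
    (hM : 0 < M) (hβ : 0 < β) (hm : 1 ≤ m)
    (hn : 1 ≤ n) (hs0 : 0 ≤ s) (hsM : s ≤ M * n) (hq : 0 ≤ q)
    (ha0 : 0 ≤ a) (ha : a ≤ β * m)
    (hb0 : 0 ≤ b) (hb : b ≤ β * M * m)
    (hc0 : 0 ≤ c) (hc : c ≤ β * M ^ 2 * m) :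
    |(q + c - (s + b) ^ 2 / (n + a + β * m)) - (q - s ^ 2 / n)| ≤ 3 * β * M ^ 2 * m := by
  have hn0 : (0:ℝ) < n := lt_of_lt_of_le one_pos hn
  have hβm : (0:ℝ) < β * m := mul_pos hβ (lt_of_lt_of_le one_pos hm)
  have hD : (0:ℝ) < n + a + β * m := by linarith
  rw [abs_le]
  constructor
  · -- lower bound: (s+b)^2/D ≤ s^2/n + 3βM²m (using c ≥ 0)
    have key : (s + b) ^ 2 / (n + a + β * m) ≤ s ^ 2 / n + 3 * β * M ^ 2 * m := by
      have e1 : (s + b) ^ 2 / (n + a + β * m)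
          = s ^ 2 / (n + a + β * m) + (2 * s * b) / (n + a + β * m)
            + b ^ 2 / (n + a + β * m) := by
        rw [← add_div, ← add_div]; ring_nf
      have t1 : s ^ 2 / (n + a + β * m) ≤ s ^ 2 / n := by
        rw [div_le_div_iff₀ hD hn0]
        nlinarith [mul_nonneg (sq_nonneg s) (by linarith : (0:ℝ) ≤ a + β * m)]
      have t2 : (2 * s * b) / (n + a + β * m) ≤ 2 * (β * M ^ 2 * m) := by
        rw [div_le_iff₀ hD]
        nlinarith [mul_le_mul hsM hb hb0 (by positivity : (0:ℝ) ≤ M * n),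
          mul_nonneg (mul_nonneg hβ.le (sq_nonneg M)) (by linarith : (0:ℝ) ≤ m),
          mul_nonneg hs0 hb0]
      have t3 : b ^ 2 / (n + a + β * m) ≤ β * M ^ 2 * m := by
        rw [div_le_iff₀ hD]
        nlinarith [mul_le_mul hb hb hb0 (le_trans hb0 hb),
          mul_nonneg (mul_nonneg (mul_nonneg hβ.le (sq_nonneg M)) (by linarith : (0:ℝ) ≤ m)) (by linarith : (0:ℝ) ≤ n + a)]
      linarith
    linarith
  · -- upper bound
    have t0 : s ^ 2 / (n + a + β * m) ≤ (s + b) ^ 2 / (n + a + β * m) := by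
      gcongr
      nlinarith [mul_nonneg hs0 hb0, sq_nonneg b]
    have t1 : s ^ 2 / n - s ^ 2 / (n + a + β * m) ≤ 2 * (β * M ^ 2 * m) := by
      rw [div_sub_div _ _ (ne_of_gt hn0) (ne_of_gt hD), div_le_iff₀ (mul_pos hn0 hD)]
      have hs2 : s ^ 2 ≤ M ^ 2 * n ^ 2 := by nlinarith [mul_le_mul hsM hsM hs0 (by positivity : (0:ℝ) ≤ M * n)]
      have step : s ^ 2 * (a + β * m) ≤ M ^ 2 * n ^ 2 * (a + β * m) :=
        mul_le_mul_of_nonneg_right hs2 (by linarith)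
      have step2 : M ^ 2 * n ^ 2 * (a + β * m) ≤ M ^ 2 * n ^ 2 * (2 * (β * m)) :=
        mul_le_mul_of_nonneg_left (by linarith) (by positivity)
      nlinarith [mul_le_mul_of_nonneg_left (by linarith : n ≤ n + a + β * m)
        (by positivity : (0:ℝ) ≤ 2 * (β * M ^ 2 * m) * n)]
    linarith
end

section
/- Fix τ ∈ (0,1), N ≥ 2, and a dataset of m items with feature values x_1,...,x_m ∈ {1,...,N}. Let K ≤ m be a natural number with K ≥ 4·(log N)/τ, and let σ be a uniformly random K-element subset of {1,...,m}. Then with probability at least 1 − 1/N², every interval (a, b] ⊆ {1,...,N} that contains the feature values of more than τ·m of the items contains x_i for some i ∈ σ. -/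
open Finset Classical

lemma desc_aux (m s : ℕ) : ∀ k, (m - s).descFactorial k * m ^ k ≤ m.descFactorial k * (m - s) ^ k := by
  intro k
  induction k with
  | zero => simp
  | succ k ih =>
    rw [Nat.descFactorial_succ, Nat.descFactorial_succ, pow_succ, pow_succ]
    have key : (m - s - k) * m ≤ (m - k) * (m - s) := by
      rcases le_or_gt m (s + k) with h | h
      · have h0 : m - s - k = 0 := by omega
        simp [h0]
      · obtain ⟨a, ha⟩ : ∃ a, m = a + s + k := ⟨m - s - k, by omega⟩
        subst ha
        have e1 : a + s + k - s - k = a := by omega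
        have e2 : a + s + k - k = a + s := by omega
        have e3 : a + s + k - s = a + k := by omega
        rw [e1, e2, e3]
        nlinarith
    calc (m - s - k) * (m - s).descFactorial k * (m ^ k * m)
        = ((m - s - k) * m) * ((m - s).descFactorial k * m ^ k) := by ring
      _ ≤ ((m - k) * (m - s)) * (m.descFactorial k * (m - s) ^ k) :=
          Nat.mul_le_mul key ih
      _ = (m - k) * m.descFactorial k * ((m - s) ^ k * (m - s)) := by ring

lemma choose_aux (m s K : ℕ) : (m - s).choose K * m ^ K ≤ m.choose K * (m - s) ^ K := by
  have h := desc_aux m s K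
  rw [Nat.descFactorial_eq_factorial_mul_choose, Nat.descFactorial_eq_factorial_mul_choose,
    mul_assoc, mul_assoc] at h
  exact Nat.le_of_mul_le_mul_left h K.factorial_pos

/-- Reservoir sampling hits every heavy interval: if `σ` is a uniformly random `K`-element
subset of the `m` items with `K ≥ 4·(log N)/τ`, then with probability at least `1 − 1/N²`,
every interval `(a, b] ⊆ {1,…,N}` containing more than `τ·m` items contains the feature value
of some sampled item. -/
theorem reservoir_hits_heavy_intervals (τ : ℝ) (hτ0 : 0 < τ) (hτ1 : τ < 1)
    (N m K : ℕ) (hN : 2 ≤ N) (x : Fin m → ℕ) (hx : ∀ i, x i ∈ Finset.Icc 1 N)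
    (hKm : K ≤ m) (hK : 4 * Real.log N / τ ≤ (K : ℝ)) :
    let Ω := (Finset.univ : Finset (Fin m)).powersetCard K
    let good := Ω.filter fun σ => ∀ a b : ℕ, a < b → b ≤ N →
      τ * m < ((Finset.univ.filter fun i => a < x i ∧ x i ≤ b).card : ℝ) →
      ∃ i ∈ σ, a < x i ∧ x i ≤ b
    1 - 1 / (N : ℝ) ^ 2 ≤ (good.card : ℝ) / (Ω.card : ℝ) := by
  classical
  intro Ω good
  -- basic positivity facts
  have hN0 : (0:ℝ) < N := by positivity
  have hN1 : (1:ℝ) < N := by exact_mod_cast Nat.lt_of_lt_of_le one_lt_two hN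
  have hlogN : 0 < Real.log N := Real.log_pos hN1
  have hK0 : 0 < K := by
    rcases Nat.eq_zero_or_pos K with h | h
    · exfalso
      rw [h] at hK
      have : 0 < 4 * Real.log N / τ := by positivity
      simp at hK
      linarith
    · exact h
  have hm0 : 0 < m := lt_of_lt_of_le hK0 hKm
  have hm0' : (0:ℝ) < m := by exact_mod_cast hm0
  set C := m.choose K with hC
  have hΩcard : Ω.card = C := by
    simp [Ω, Finset.card_powersetCard, hC]
  have hC0 : 0 < C := Nat.choose_pos hKm
  have hC0' : (0:ℝ) < C := by exact_mod_cast hC0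
  -- the bad set
  set T : ℕ × ℕ → Finset (Fin m) :=
    fun p => Finset.univ.filter fun i => p.1 < x i ∧ x i ≤ p.2 with hT
  set bad := Ω.filter (fun σ => ¬ (∀ a b : ℕ, a < b → b ≤ N →
      τ * m < ((Finset.univ.filter fun i => a < x i ∧ x i ≤ b).card : ℝ) →
      ∃ i ∈ σ, a < x i ∧ x i ≤ b)) with hbad
  have hsplit : good.card + bad.card = Ω.card :=
    Finset.card_filter_add_card_filter_not _
  -- per-interval miss sets
  set B : ℕ × ℕ → Finset (Finset (Fin m)) :=
    fun p => Ω.filter fun σ => τ * m < ((T p).card : ℝ) ∧ ∀ i ∈ σ, ¬(p.1 < x i ∧ x i ≤ p.2)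
    with hB
  have hsub : bad ⊆ (Finset.range N ×ˢ Finset.Icc 1 N).biUnion B := by
    intro σ hσ
    rw [hbad, Finset.mem_filter] at hσ
    obtain ⟨hσΩ, hbadσ⟩ := hσ
    push_neg at hbadσ
    obtain ⟨a, b, hab, hbN, hheavy, hmiss⟩ := hbadσ
    refine Finset.mem_biUnion.mpr ⟨(a, b), ?_, ?_⟩
    · simp only [Finset.mem_product, Finset.mem_range, Finset.mem_Icc]
      exact ⟨lt_of_lt_of_le hab hbN, by omega, hbN⟩
    · rw [hB, Finset.mem_filter]
      refine ⟨hσΩ, hheavy, fun i hi => ?_⟩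
      rintro ⟨h1, h2⟩
      exact absurd h2 (not_le.mpr (hmiss i hi h1))
  -- the key counting bound for a single interval
  have hmiss_card : ∀ p : ℕ × ℕ, ((B p).card : ℝ) ≤ (C : ℝ) * (1 - τ) ^ K := by
    intro p
    have h1τ : (0:ℝ) ≤ 1 - τ := by linarith
    by_cases hheavy : τ * m < ((T p).card : ℝ)
    · -- B p equals the set of K-subsets of (T p)ᶜ
      have hBeq : B p = (T p)ᶜ.powersetCard K := by
        ext σ
        rw [hB]
        simp only [Finset.mem_filter, Finset.mem_powersetCard]
        constructor
        · rintro ⟨hσΩ, -, hm⟩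
          have hσ' := Finset.mem_powersetCard.mp hσΩ
          refine ⟨fun i hi => Finset.mem_compl.mpr ?_, hσ'.2⟩
          rw [hT]
          simp only [Finset.mem_filter, Finset.mem_univ, true_and]
          exact hm i hi
        · rintro ⟨hsub', hcard⟩
          refine ⟨Finset.mem_powersetCard.mpr ⟨Finset.subset_univ _, hcard⟩, hheavy, ?_⟩
          intro i hi
          have := Finset.mem_compl.mp (hsub' hi)
          rw [hT] at this
          simpa using this
      set t := (T p).card with ht
      have htm : t ≤ m := by
        calc t ≤ Fintype.card (Fin m) := Finset.card_le_univ _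
          _ = m := Fintype.card_fin m
      have hBcard : (B p).card = (m - t).choose K := by
        rw [hBeq, Finset.card_powersetCard, Finset.card_compl, Fintype.card_fin]
      rw [hBcard]
      -- real-valued bound
      have hcast : ((m - t : ℕ) : ℝ) = (m : ℝ) - t := by
        push_cast [Nat.cast_sub htm]; ring
      have hratio : ((m - t : ℕ) : ℝ) ≤ (1 - τ) * m := by
        rw [hcast]
        have : τ * m < (t : ℝ) := hheavy
        nlinarith
      have hnat := choose_aux m t K
      have hreal : ((m - t).choose K : ℝ) * (m : ℝ) ^ K ≤ (C : ℝ) * ((m - t : ℕ) : ℝ) ^ K := by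
        exact_mod_cast hnat
      have hpow : ((m - t : ℕ) : ℝ) ^ K ≤ ((1 - τ) * m) ^ K :=
        pow_le_pow_left₀ (by positivity) hratio K
      have hmK : (0:ℝ) < (m : ℝ) ^ K := by positivity
      rw [← mul_le_mul_iff_of_pos_right hmK]
      calc ((m - t).choose K : ℝ) * (m : ℝ) ^ K
          ≤ (C : ℝ) * ((m - t : ℕ) : ℝ) ^ K := hreal
        _ ≤ (C : ℝ) * ((1 - τ) * m) ^ K := by
            exact mul_le_mul_of_nonneg_left hpow (by positivity)
        _ = (C : ℝ) * (1 - τ) ^ K * (m : ℝ) ^ K := by rw [mul_pow]; ring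
    · have : B p = ∅ := by
        rw [hB]
        apply Finset.filter_false_of_mem
        intro σ hσ h
        exact hheavy h.1
      rw [this]
      simp only [Finset.card_empty, Nat.cast_zero]
      positivity
  -- union bound
  have hbadcard : (bad.card : ℝ) ≤ (N : ℝ) ^ 2 * ((C : ℝ) * (1 - τ) ^ K) := by
    have h1 : bad.card ≤ ∑ p ∈ Finset.range N ×ˢ Finset.Icc 1 N, (B p).card :=
      le_trans (Finset.card_le_card hsub) (Finset.card_biUnion_le)
    have h2 : (bad.card : ℝ) ≤ ∑ p ∈ Finset.range N ×ˢ Finset.Icc 1 N, ((B p).card : ℝ) := by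
      exact_mod_cast h1
    calc (bad.card : ℝ) ≤ ∑ p ∈ Finset.range N ×ˢ Finset.Icc 1 N, ((B p).card : ℝ) := h2
      _ ≤ ∑ _p ∈ Finset.range N ×ˢ Finset.Icc 1 N, (C : ℝ) * (1 - τ) ^ K :=
          Finset.sum_le_sum fun p _ => hmiss_card p
      _ = ((Finset.range N ×ˢ Finset.Icc 1 N).card : ℝ) * ((C : ℝ) * (1 - τ) ^ K) := by
          rw [Finset.sum_const, nsmul_eq_mul]
      _ = (N : ℝ) ^ 2 * ((C : ℝ) * (1 - τ) ^ K) := by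
          rw [Finset.card_product, Finset.card_range, Nat.card_Icc]
          push_cast
          ring_nf
  -- exponential bound
  have hexp : (1 - τ) ^ K ≤ 1 / (N : ℝ) ^ 4 := by
    have e1 : (1 - τ) ^ K ≤ Real.exp (-τ) ^ K := by
      apply pow_le_pow_left₀ (by linarith)
      have := Real.add_one_le_exp (-τ)
      linarith
    have e2 : Real.exp (-τ) ^ K = Real.exp (-(τ * K)) := by
      rw [← Real.exp_nat_mul]
      ring_nf
    have e3 : Real.exp (-(τ * K)) ≤ Real.exp (-(4 * Real.log N)) := by
      apply Real.exp_le_exp.mpr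
      have := (div_le_iff₀ hτ0).mp hK
      linarith
    have e4 : Real.exp (-(4 * Real.log N)) = 1 / (N : ℝ) ^ 4 := by
      rw [Real.exp_neg]
      rw [show (4 : ℝ) * Real.log N = ((4 : ℕ) : ℝ) * Real.log N by norm_num]
      rw [Real.exp_nat_mul, Real.exp_log hN0]
      rw [one_div]
    calc (1 - τ) ^ K ≤ Real.exp (-τ) ^ K := e1
      _ = Real.exp (-(τ * K)) := e2
      _ ≤ Real.exp (-(4 * Real.log N)) := e3
      _ = 1 / (N : ℝ) ^ 4 := e4
  -- conclude
  have hbadC : (bad.card : ℝ) ≤ (C : ℝ) / (N : ℝ) ^ 2 := by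
    calc (bad.card : ℝ) ≤ (N : ℝ) ^ 2 * ((C : ℝ) * (1 - τ) ^ K) := hbadcard
      _ ≤ (N : ℝ) ^ 2 * ((C : ℝ) * (1 / (N : ℝ) ^ 4)) := by
          apply mul_le_mul_of_nonneg_left _ (by positivity)
          exact mul_le_mul_of_nonneg_left hexp (by positivity)
      _ = (C : ℝ) / (N : ℝ) ^ 2 := by
          field_simp
  have hgoodcard : (good.card : ℝ) = (C : ℝ) - bad.card := by
    have : good.card + bad.card = C := by rw [hsplit, hΩcard]
    have := congrArg (Nat.cast : ℕ → ℝ) this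
    push_cast at this
    linarith
  rw [hΩcard, hgoodcard]
  rw [le_div_iff₀ hC0']
  have hN2 : (0:ℝ) < (N : ℝ) ^ 2 := by positivity
  have : (1 - 1 / (N : ℝ) ^ 2) * C = C - C / (N : ℝ) ^ 2 := by
    field_simp
  rw [this]
  linarith
end

section
/- Let j⁻ = j⁺ − 1 be two adjacent splits in {0,1,...,N−1}. Suppose the data points with x_i ≤ j⁻ number a ≥ 1 and have label mean μ, the data points with x_i > j⁺ number b ≥ 1 and have label mean γ, and all data points with x_i = j⁺ have the same label value v and number B ≥ 0. Then m·(L(j⁺) − L(j⁻)) = B·[ (a/(a+B))·(μ − v)² − (b/(b+B))·(γ − v)² ]. -/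
open Finset

/-- Adjacent splits `j⁻ = j⁺ − 1`: if the left of `j⁻` holds `a ≥ 1` points with label mean
`μ`, the right of `j⁺` holds `b ≥ 1` points with label mean `γ`, and the `B ≥ 0` points at
`x = j⁺` all carry label `v`, then
`m·(L(j⁺) − L(j⁻)) = B·[(a/(a+B))(μ−v)² − (b/(b+B))(γ−v)²]`. -/
theorem adjacent_split_gap (m N : ℕ) (hm : 1 ≤ m) (x : Fin m → ℕ) (y : Fin m → ℝ)
    (hx : ∀ i, x i ∈ Finset.Icc 1 N)
    (jp : ℕ) (hjp1 : 1 ≤ jp) (hjpN : jp ≤ N - 1)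
    (a b B : ℕ) (μ γ v : ℝ) (ha : 1 ≤ a) (hb : 1 ≤ b)
    (hacard : (Finset.univ.filter fun i => x i ≤ jp - 1).card = a)
    (hasum : (∑ i ∈ Finset.univ.filter fun i => x i ≤ jp - 1, y i) = a * μ)
    (hbcard : (Finset.univ.filter fun i => jp < x i).card = b)
    (hbsum : (∑ i ∈ Finset.univ.filter fun i => jp < x i, y i) = b * γ)
    (hBcard : (Finset.univ.filter fun i => x i = jp).card = B)
    (hv : ∀ i, x i = jp → y i = v) :
    (m : ℝ) * (L m N x y jp - L m N x y (jp - 1)) =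
      (B : ℝ) * (((a : ℝ) / (a + B)) * (μ - v) ^ 2 - ((b : ℝ) / (b + B)) * (γ - v) ^ 2) := by
  classical
  have hxN : ∀ i, 1 ≤ x i ∧ x i ≤ N := by
    intro i; have := hx i; simpa [Finset.mem_Icc] using this
  set Af := Finset.univ.filter (fun i : Fin m => x i ≤ jp - 1) with hAf
  set Mf := Finset.univ.filter (fun i : Fin m => x i = jp) with hMf
  set Rf := Finset.univ.filter (fun i : Fin m => jp < x i) with hRf
  have hdAM : Disjoint Af Mf := by
    simp only [hAf, hMf, Finset.disjoint_left, Finset.mem_filter, Finset.mem_univ, true_and]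
    intro i h1 h2; omega
  have hdMR : Disjoint Mf Rf := by
    simp only [hMf, hRf, Finset.disjoint_left, Finset.mem_filter, Finset.mem_univ, true_and]
    intro i h1 h2; omega
  have eL2 : Finset.univ.filter (fun i => x i ∈ Finset.Icc 1 jp) = Af ∪ Mf := by
    ext i
    simp only [hAf, hMf, Finset.mem_filter, Finset.mem_univ, true_and, Finset.mem_union,
      Finset.mem_Icc]
    have := hxN i; omega
  have eL1 : Finset.univ.filter (fun i => x i ∈ Finset.Icc 1 (jp - 1)) = Af := by
    ext i
    simp only [hAf, Finset.mem_filter, Finset.mem_univ, true_and, Finset.mem_Icc]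
    have := hxN i; omega
  have eR2 : Finset.univ.filter (fun i => x i ∈ Finset.Icc (jp + 1) N) = Rf := by
    ext i
    simp only [hRf, Finset.mem_filter, Finset.mem_univ, true_and, Finset.mem_Icc]
    have := hxN i; omega
  have eR1 : Finset.univ.filter (fun i => x i ∈ Finset.Icc (jp - 1 + 1) N) = Mf ∪ Rf := by
    ext i
    simp only [hMf, hRf, Finset.mem_filter, Finset.mem_univ, true_and, Finset.mem_union,
      Finset.mem_Icc]
    have := hxN i; omega
  have hAne : Af.Nonempty := Finset.card_pos.mp (by omega)
  have hRne : Rf.Nonempty := Finset.card_pos.mp (by omega)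
  have hAMne : (Af ∪ Mf).Nonempty := hAne.mono Finset.subset_union_left
  have hMRne : (Mf ∪ Rf).Nonempty := hRne.mono Finset.subset_union_right
  -- sums over Mf
  have hMsum : (∑ i ∈ Mf, y i) = B * v := by
    rw [Finset.sum_congr rfl (fun i hi => hv i (by simpa [hMf] using hi)),
      Finset.sum_const, hBcard, nsmul_eq_mul]
  have hMsq : (∑ i ∈ Mf, (y i) ^ 2) = B * v ^ 2 := by
    rw [Finset.sum_congr rfl (fun i hi => by
      rw [hv i (by simpa [hMf] using hi)]),
      Finset.sum_const, hBcard, nsmul_eq_mul]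
  have hAMcard : ((Af ∪ Mf).card : ℝ) = a + B := by
    rw [Finset.card_union_of_disjoint hdAM]
    push_cast [hacard, hBcard]; ring
  have hMRcard : ((Mf ∪ Rf).card : ℝ) = b + B := by
    rw [Finset.card_union_of_disjoint hdMR]
    push_cast [hbcard, hBcard]; ring
  have hAMsum : (∑ i ∈ Af ∪ Mf, y i) = a * μ + B * v := by
    rw [Finset.sum_union hdAM, hMsum, hasum]
  have hMRsum : (∑ i ∈ Mf ∪ Rf, y i) = B * v + b * γ := by
    rw [Finset.sum_union hdMR, hMsum, hbsum]
  have hAMsq : (∑ i ∈ Af ∪ Mf, (y i) ^ 2) = (∑ i ∈ Af, (y i) ^ 2) + B * v ^ 2 := by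
    rw [Finset.sum_union hdAM, hMsq]
  have hMRsq : (∑ i ∈ Mf ∪ Rf, (y i) ^ 2) = B * v ^ 2 + (∑ i ∈ Rf, (y i) ^ 2) := by
    rw [Finset.sum_union hdMR, hMsq]
  -- compute the four SSE values
  have S1 : SSE m x y (Finset.Icc 1 jp) =
      ((∑ i ∈ Af, (y i) ^ 2) + B * v ^ 2) - (a * μ + B * v) ^ 2 / ((a : ℝ) + B) := by
    rw [SSE]; simp only [eL2, if_pos hAMne, hAMsum, hAMsq, hAMcard]
  have S2 : SSE m x y (Finset.Icc (jp + 1) N) =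
      (∑ i ∈ Rf, (y i) ^ 2) - ((b : ℝ) * γ) ^ 2 / (b : ℝ) := by
    rw [SSE]
    simp only [eR2, if_pos hRne]
    rw [hbsum, hbcard]
  have S3 : SSE m x y (Finset.Icc 1 (jp - 1)) =
      (∑ i ∈ Af, (y i) ^ 2) - ((a : ℝ) * μ) ^ 2 / (a : ℝ) := by
    rw [SSE]
    simp only [eL1, if_pos hAne]
    rw [hasum, hacard]
  have S4 : SSE m x y (Finset.Icc (jp - 1 + 1) N) =
      (B * v ^ 2 + (∑ i ∈ Rf, (y i) ^ 2)) - (B * v + b * γ) ^ 2 / ((b : ℝ) + B) := by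
    rw [SSE]; simp only [eR1, if_pos hMRne, hMRsum, hMRsq, hMRcard]
  have hm0 : (m : ℝ) ≠ 0 := by positivity
  have ha0 : (a : ℝ) ≠ 0 := by positivity
  have hb0 : (b : ℝ) ≠ 0 := by positivity
  have haB : (a : ℝ) + B ≠ 0 := by positivity
  have hbB : (b : ℝ) + B ≠ 0 := by positivity
  rw [L, L, S1, S2, S3, S4]
  field_simp
  ring
end

section
/- In the classification lower-bound construction, for every split j ∈ {0,1,...,N} with j ∉ {2i−1, 2i}, the misclassification loss satisfies L_mis(j) ≥ 4/9. -/
open Finset Classical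

/-- Number of data points with feature value in the range `R` and label `v`. -/
noncomputable def fcount (data : Multiset (ℕ × ℝ)) (v : ℝ) (R : Finset ℕ) : ℕ :=
  Multiset.card (data.filter fun p => p.1 ∈ R ∧ p.2 = v)

/-- Misclassification loss of split `j ∈ {0,…,N}`. -/
noncomputable def Lmis (N : ℕ) (data : Multiset (ℕ × ℝ)) (j : ℕ) : ℝ :=
  (1 / (Multiset.card data : ℝ)) *
    (((min (fcount data (-1) (Finset.Icc 1 j)) (fcount data 1 (Finset.Icc 1 j)) : ℕ) : ℝ) +
     ((min (fcount data (-1) (Finset.Icc (j + 1) N))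
         (fcount data 1 (Finset.Icc (j + 1) N)) : ℕ) : ℝ))

/-- The classification lower-bound dataset: for each `k ∈ {1,…,n}`, `B = n` copies of
`(2k, s_k)` with `s_k = +1` if `z_k = 1` and `s_k = −1` if `z_k = 0`; `T = 4n²` copies of
`(2i−1, −1)`; and `T` copies of `(2i+1, +1)`. -/
noncomputable def classData (n i : ℕ) (z : ℕ → ℕ) : Multiset (ℕ × ℝ) :=
  (∑ k ∈ Finset.Icc 1 n, Multiset.replicate n (2 * k, if z k = 1 then (1 : ℝ) else -1))
  + Multiset.replicate (4 * n ^ 2) (2 * i - 1, (-1 : ℝ))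
  + Multiset.replicate (4 * n ^ 2) (2 * i + 1, (1 : ℝ))


lemma card_finsum {α β : Type*} (s : Finset α) (f : α → Multiset β) :
    Multiset.card (∑ k ∈ s, f k) = ∑ k ∈ s, Multiset.card (f k) := by
  induction s using Finset.cons_induction with
  | empty => simp
  | cons a s ha ih => simp [Finset.sum_cons, ih]

lemma card_classData (n i : ℕ) (z : ℕ → ℕ) :
    Multiset.card (classData n i z) = 9 * n ^ 2 := by
  unfold classData
  rw [Multiset.card_add, Multiset.card_add, card_finsum]
  simp [Multiset.card_replicate, Finset.sum_const, Nat.card_Icc]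
  ring

lemma fcount_rep_ge (n i : ℕ) (z : ℕ → ℕ) (R : Finset ℕ) (v : ℝ) (q : ℕ × ℝ)
    (hq : q.1 ∈ R ∧ q.2 = v)
    (h : ∃ a b : Multiset (ℕ × ℝ),
      classData n i z = a + Multiset.replicate (4 * n ^ 2) q + b) :
    4 * n ^ 2 ≤ fcount (classData n i z) v R := by
  obtain ⟨a, b, hab⟩ := h
  unfold fcount
  rw [hab, Multiset.filter_add, Multiset.filter_add, Multiset.card_add, Multiset.card_add]
  have : Multiset.filter (fun p => p.1 ∈ R ∧ p.2 = v) (Multiset.replicate (4 * n ^ 2) q)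
      = Multiset.replicate (4 * n ^ 2) q := by
    apply Multiset.filter_eq_self.2
    intro x hx
    rw [Multiset.eq_of_mem_replicate hx]
    exact hq
  rw [this, Multiset.card_replicate]
  omega

lemma fcount_neg_ge (n i : ℕ) (z : ℕ → ℕ) (R : Finset ℕ) (h : 2 * i - 1 ∈ R) :
    4 * n ^ 2 ≤ fcount (classData n i z) (-1) R := by
  apply fcount_rep_ge n i z R (-1) (2 * i - 1, (-1 : ℝ)) ⟨h, rfl⟩
  exact ⟨_, _, rfl⟩

lemma fcount_pos_ge (n i : ℕ) (z : ℕ → ℕ) (R : Finset ℕ) (h : 2 * i + 1 ∈ R) :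
    4 * n ^ 2 ≤ fcount (classData n i z) 1 R := by
  refine fcount_rep_ge n i z R 1 (2 * i + 1, (1 : ℝ)) ⟨h, rfl⟩ ?_
  refine ⟨(∑ k ∈ Finset.Icc 1 n, Multiset.replicate n (2 * k, if z k = 1 then (1 : ℝ) else -1))
    + Multiset.replicate (4 * n ^ 2) (2 * i - 1, (-1 : ℝ)), 0, ?_⟩
  simp [classData]

/-- In the classification lower-bound construction, every split `j ∉ {2i−1, 2i}` has
misclassification loss at least `4/9`. -/
theorem cls_far_splits_loss (n : ℕ) (hn : 1 ≤ n) (i : ℕ) (hi : i ∈ Finset.Icc 1 n)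
    (z : ℕ → ℕ) (hz : ∀ k, z k = 0 ∨ z k = 1)
    (j : ℕ) (hj : j ≤ 2 * n + 1) (hj1 : j ≠ 2 * i - 1) (hj2 : j ≠ 2 * i) :
    (4 : ℝ) / 9 ≤ Lmis (2 * n + 1) (classData n i z) j := by
  have hi1 : 1 ≤ i := (Finset.mem_Icc.mp hi).1
  have hi2 : i ≤ n := (Finset.mem_Icc.mp hi).2
  unfold Lmis
  rw [card_classData]
  set a := fcount (classData n i z) (-1) (Finset.Icc 1 j) with ha
  set b := fcount (classData n i z) 1 (Finset.Icc 1 j) with hb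
  set c := fcount (classData n i z) (-1) (Finset.Icc (j + 1) (2 * n + 1)) with hc
  set d := fcount (classData n i z) 1 (Finset.Icc (j + 1) (2 * n + 1)) with hd
  have hkey : 4 * n ^ 2 ≤ min a b + min c d := by
    rcases lt_or_ge j (2 * i - 1) with hlt | hge
    · have h1 : 2 * i - 1 ∈ Finset.Icc (j + 1) (2 * n + 1) := by
        rw [Finset.mem_Icc]; omega
      have h2 : 2 * i + 1 ∈ Finset.Icc (j + 1) (2 * n + 1) := by
        rw [Finset.mem_Icc]; omega
      have := le_min (fcount_neg_ge n i z _ h1) (fcount_pos_ge n i z _ h2)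
      omega
    · have hge' : 2 * i + 1 ≤ j := by omega
      have h1 : 2 * i - 1 ∈ Finset.Icc 1 j := by rw [Finset.mem_Icc]; omega
      have h2 : 2 * i + 1 ∈ Finset.Icc 1 j := by rw [Finset.mem_Icc]; omega
      have := le_min (fcount_neg_ge n i z _ h1) (fcount_pos_ge n i z _ h2)
      omega
  have h9 : (0 : ℝ) < 9 * (n : ℝ) ^ 2 := by positivity
  have hkey' : (4 : ℝ) * (n : ℝ) ^ 2 ≤ (min a b : ℕ) + (min c d : ℕ) := by
    exact_mod_cast hkey
  rw [one_div, show ((9 * n ^ 2 : ℕ) : ℝ) = 9 * (n : ℝ) ^ 2 by push_cast; ring,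
    inv_mul_eq_div, le_div_iff₀ h9]
  nlinarith
end

section
/- In the classification lower-bound construction, for each split j ∈ {2i−1, 2i}: L_mis(j) ≤ 1/9; moreover the majority label on the left side is −1 and the majority label on the right side is +1, i.e. f_{−1,{1,...,j}} > f_{+1,{1,...,j}} and f_{+1,{j+1,...,N}} > f_{−1,{j+1,...,N}}. Consequently min_{0 ≤ j ≤ N} L_mis(j) = min{L_mis(2i−1), L_mis(2i)}. -/
open Finset Classical

lemma card_filter_replicate' {α : Type*} (p : α → Prop) [DecidablePred p] (n : ℕ) (a : α) :
    Multiset.card (Multiset.filter p (Multiset.replicate n a)) = if p a then n else 0 := by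
  induction n with
  | zero => simp
  | succ m ih =>
    rw [Multiset.replicate_succ, Multiset.filter_cons]
    by_cases h : p a <;> simp [h, ih]

lemma card_filter_sum' {α ι : Type*} (p : α → Prop) [DecidablePred p]
    (s : Finset ι) (f : ι → Multiset α) :
    Multiset.card (Multiset.filter p (∑ k ∈ s, f k))
      = ∑ k ∈ s, Multiset.card (Multiset.filter p (f k)) := by
  classical
  induction s using Finset.cons_induction with
  | empty => simp
  | cons a s ha ih =>
    rw [Finset.sum_cons, Multiset.filter_add, Multiset.card_add, ih, Finset.sum_cons]

lemma card_sum' {α ι : Type*} (s : Finset ι) (f : ι → Multiset α) :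
    Multiset.card (∑ k ∈ s, f k) = ∑ k ∈ s, Multiset.card (f k) := by
  classical
  induction s using Finset.cons_induction with
  | empty => simp
  | cons a s ha ih => rw [Finset.sum_cons, Multiset.card_add, ih, Finset.sum_cons]

lemma fcount_eq (n i : ℕ) (z : ℕ → ℕ) (v : ℝ) (R : Finset ℕ) :
    fcount (classData n i z) v R =
      (∑ k ∈ Finset.Icc 1 n,
        if 2 * k ∈ R ∧ (if z k = 1 then (1 : ℝ) else -1) = v then n else 0)
      + (if 2 * i - 1 ∈ R ∧ (-1 : ℝ) = v then 4 * n ^ 2 else 0)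
      + (if 2 * i + 1 ∈ R ∧ (1 : ℝ) = v then 4 * n ^ 2 else 0) := by
  unfold fcount classData
  rw [Multiset.filter_add, Multiset.filter_add, Multiset.card_add, Multiset.card_add,
    card_filter_sum']
  simp [card_filter_replicate']

/-- In the classification lower-bound construction, each split `j ∈ {2i−1, 2i}` has
misclassification loss at most `1/9`, the left majority label is `−1` and the right majority
label is `+1`; consequently the optimum over all splits `0 ≤ j ≤ N` is attained at `2i−1`
or `2i`. -/
theorem cls_near_splits_loss (n : ℕ) (hn : 1 ≤ n) (i : ℕ) (hi : i ∈ Finset.Icc 1 n)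
    (z : ℕ → ℕ) (hz : ∀ k, z k = 0 ∨ z k = 1) :
    (∀ j ∈ ({2 * i - 1, 2 * i} : Finset ℕ),
      Lmis (2 * n + 1) (classData n i z) j ≤ 1 / 9 ∧
      fcount (classData n i z) 1 (Finset.Icc 1 j)
        < fcount (classData n i z) (-1) (Finset.Icc 1 j) ∧
      fcount (classData n i z) (-1) (Finset.Icc (j + 1) (2 * n + 1))
        < fcount (classData n i z) 1 (Finset.Icc (j + 1) (2 * n + 1))) ∧
    (Finset.Icc 0 (2 * n + 1)).inf' (Finset.nonempty_Icc.mpr (Nat.zero_le _))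
        (Lmis (2 * n + 1) (classData n i z))
      = min (Lmis (2 * n + 1) (classData n i z) (2 * i - 1))
          (Lmis (2 * n + 1) (classData n i z) (2 * i)) := by
  obtain ⟨hi1, hi2⟩ := Finset.mem_Icc.mp hi
  set D := classData n i z with hD
  have hcard : (Multiset.card D : ℝ) = 9 * (n : ℝ) ^ 2 := by
    rw [hD, card_classData]; push_cast; ring
  have hn2pos : (0 : ℝ) < 9 * (n : ℝ) ^ 2 := by positivity
  -- generic upper bound on a z-sum term
  have hZub : ∀ (v : ℝ) (R : Finset ℕ),
      (∑ k ∈ Finset.Icc 1 n,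
        if 2 * k ∈ R ∧ (if z k = 1 then (1 : ℝ) else -1) = v then n else 0) ≤ n * n := by
    intro v R
    calc (∑ k ∈ Finset.Icc 1 n,
        if 2 * k ∈ R ∧ (if z k = 1 then (1 : ℝ) else -1) = v then n else 0)
        ≤ ∑ k ∈ Finset.Icc 1 n, n := by
          apply Finset.sum_le_sum; intro k _; split_ifs <;> omega
      _ = n * n := by simp [Finset.sum_const, Nat.card_Icc]
  -- combined bound: wrong-side z-count sum
  have hZkey : ∀ j : ℕ,
      (∑ k ∈ Finset.Icc 1 n,
        if 2 * k ∈ Finset.Icc 1 j ∧ (if z k = 1 then (1 : ℝ) else -1) = 1 then n else 0)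
      + (∑ k ∈ Finset.Icc 1 n,
        if 2 * k ∈ Finset.Icc (j + 1) (2 * n + 1)
            ∧ (if z k = 1 then (1 : ℝ) else -1) = -1 then n else 0) ≤ n * n := by
    intro j
    rw [← Finset.sum_add_distrib]
    calc (∑ k ∈ Finset.Icc 1 n,
          ((if 2 * k ∈ Finset.Icc 1 j ∧ (if z k = 1 then (1 : ℝ) else -1) = 1 then n else 0)
          + (if 2 * k ∈ Finset.Icc (j + 1) (2 * n + 1)
              ∧ (if z k = 1 then (1 : ℝ) else -1) = -1 then n else 0)))
        ≤ ∑ k ∈ Finset.Icc 1 n, n := by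
          apply Finset.sum_le_sum; intro k _
          rcases hz k with h | h <;> simp [h, Finset.mem_Icc] <;> split_ifs <;> omega
      _ = n * n := by simp [Finset.sum_const, Nat.card_Icc]
  -- fcount bounds for near splits
  have hf1left : ∀ j : ℕ, j ≤ 2 * i →
      fcount D 1 (Finset.Icc 1 j) ≤
        (∑ k ∈ Finset.Icc 1 n,
          if 2 * k ∈ Finset.Icc 1 j ∧ (if z k = 1 then (1 : ℝ) else -1) = 1 then n else 0) := by
    intro j hj
    rw [hD, fcount_eq]
    rw [if_neg (by rintro ⟨-, h⟩; norm_num at h),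
        if_neg (by rintro ⟨h, -⟩; rw [Finset.mem_Icc] at h; omega)]
    omega
  have hfm1right : ∀ j : ℕ, 2 * i - 1 ≤ j →
      fcount D (-1) (Finset.Icc (j + 1) (2 * n + 1)) ≤
        (∑ k ∈ Finset.Icc 1 n,
          if 2 * k ∈ Finset.Icc (j + 1) (2 * n + 1)
            ∧ (if z k = 1 then (1 : ℝ) else -1) = -1 then n else 0) := by
    intro j hj
    rw [hD, fcount_eq]
    rw [if_neg (by rintro ⟨h, -⟩; rw [Finset.mem_Icc] at h; omega),
        if_neg (by rintro ⟨-, h⟩; norm_num at h)]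
    omega
  have hfm1left : ∀ j : ℕ, 2 * i - 1 ≤ j →
      4 * n ^ 2 ≤ fcount D (-1) (Finset.Icc 1 j) := by
    intro j hj
    rw [hD, fcount_eq]
    rw [if_pos ⟨Finset.mem_Icc.mpr (by omega), rfl⟩]
    omega
  have hf1right : ∀ j : ℕ, j ≤ 2 * i →
      4 * n ^ 2 ≤ fcount D 1 (Finset.Icc (j + 1) (2 * n + 1)) := by
    intro j hj
    rw [hD, fcount_eq]
    rw [if_neg (by rintro ⟨-, h⟩; norm_num at h),
        if_pos ⟨Finset.mem_Icc.mpr (by omega), rfl⟩]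
    omega
  have hnsq : 1 ≤ n * n := Nat.one_le_iff_ne_zero.mpr (by positivity)
  -- majority claims and loss bound for near splits
  have hnear : ∀ j : ℕ, 2 * i - 1 ≤ j → j ≤ 2 * i →
      Lmis (2 * n + 1) D j ≤ 1 / 9 ∧
      fcount D 1 (Finset.Icc 1 j) < fcount D (-1) (Finset.Icc 1 j) ∧
      fcount D (-1) (Finset.Icc (j + 1) (2 * n + 1))
        < fcount D 1 (Finset.Icc (j + 1) (2 * n + 1)) := by
    intro j hj1 hj2
    have hkey : fcount D 1 (Finset.Icc 1 j)
        + fcount D (-1) (Finset.Icc (j + 1) (2 * n + 1)) ≤ n * n :=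
      le_trans (add_le_add (hf1left j hj2) (hfm1right j hj1)) (hZkey j)
    refine ⟨?_, ?_, ?_⟩
    · rw [Lmis, hcard]
      have hS : ((min (fcount D (-1) (Finset.Icc 1 j)) (fcount D 1 (Finset.Icc 1 j)) : ℕ) : ℝ)
          + ((min (fcount D (-1) (Finset.Icc (j + 1) (2 * n + 1)))
              (fcount D 1 (Finset.Icc (j + 1) (2 * n + 1))) : ℕ) : ℝ) ≤ (n : ℝ) ^ 2 := by
        have : min (fcount D (-1) (Finset.Icc 1 j)) (fcount D 1 (Finset.Icc 1 j))
            + min (fcount D (-1) (Finset.Icc (j + 1) (2 * n + 1)))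
              (fcount D 1 (Finset.Icc (j + 1) (2 * n + 1))) ≤ n * n :=
          le_trans (add_le_add (Nat.min_le_right _ _) (Nat.min_le_left _ _)) hkey
        calc ((min (fcount D (-1) (Finset.Icc 1 j)) (fcount D 1 (Finset.Icc 1 j)) : ℕ) : ℝ)
            + ((min (fcount D (-1) (Finset.Icc (j + 1) (2 * n + 1)))
                (fcount D 1 (Finset.Icc (j + 1) (2 * n + 1))) : ℕ) : ℝ)
            ≤ ((n * n : ℕ) : ℝ) := by exact_mod_cast this
          _ = (n : ℝ) ^ 2 := by push_cast; ring
      calc (1 / (9 * (n : ℝ) ^ 2)) *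
            (((min (fcount D (-1) (Finset.Icc 1 j)) (fcount D 1 (Finset.Icc 1 j)) : ℕ) : ℝ)
            + ((min (fcount D (-1) (Finset.Icc (j + 1) (2 * n + 1)))
                (fcount D 1 (Finset.Icc (j + 1) (2 * n + 1))) : ℕ) : ℝ))
          ≤ (1 / (9 * (n : ℝ) ^ 2)) * ((n : ℝ) ^ 2) := by
            apply mul_le_mul_of_nonneg_left hS (by positivity)
        _ = 1 / 9 := by
            have : ((n : ℝ)) ≠ 0 := by positivity
            field_simp
    · have h1 : fcount D 1 (Finset.Icc 1 j) ≤ n * n := by omega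
      have h2 := hfm1left j hj1
      have : n * n < 4 * n ^ 2 := by nlinarith
      omega
    · have h1 : fcount D (-1) (Finset.Icc (j + 1) (2 * n + 1)) ≤ n * n := by omega
      have h2 := hf1right j hj2
      have : n * n < 4 * n ^ 2 := by nlinarith
      omega
  -- far splits have loss at least 1/9
  have hfar : ∀ j : ℕ, (j + 1 ≤ 2 * i - 1 ∨ 2 * i + 1 ≤ j) →
      1 / 9 ≤ Lmis (2 * n + 1) D j := by
    intro j hj
    have hmin : n ^ 2 ≤
        min (fcount D (-1) (Finset.Icc 1 j)) (fcount D 1 (Finset.Icc 1 j))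
        + min (fcount D (-1) (Finset.Icc (j + 1) (2 * n + 1)))
            (fcount D 1 (Finset.Icc (j + 1) (2 * n + 1))) := by
      rcases hj with hj | hj
      · -- both heavy blocks on the right
        have hm1 : 4 * n ^ 2 ≤ fcount D (-1) (Finset.Icc (j + 1) (2 * n + 1)) := by
          rw [hD, fcount_eq]
          rw [if_pos ⟨Finset.mem_Icc.mpr (by omega), rfl⟩]
          omega
        have h1 : 4 * n ^ 2 ≤ fcount D 1 (Finset.Icc (j + 1) (2 * n + 1)) :=
          hf1right j (by omega)
        have : 1 ≤ n ^ 2 := by nlinarith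
        omega
      · -- both heavy blocks on the left
        have hm1 : 4 * n ^ 2 ≤ fcount D (-1) (Finset.Icc 1 j) := hfm1left j (by omega)
        have h1 : 4 * n ^ 2 ≤ fcount D 1 (Finset.Icc 1 j) := by
          rw [hD, fcount_eq]
          rw [if_neg (by rintro ⟨-, h⟩; norm_num at h),
              if_pos ⟨Finset.mem_Icc.mpr (by omega), rfl⟩]
          omega
        have : 1 ≤ n ^ 2 := by nlinarith
        omega
    rw [Lmis, hcard]
    have hS : ((n : ℝ)) ^ 2 ≤
        ((min (fcount D (-1) (Finset.Icc 1 j)) (fcount D 1 (Finset.Icc 1 j)) : ℕ) : ℝ)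
        + ((min (fcount D (-1) (Finset.Icc (j + 1) (2 * n + 1)))
            (fcount D 1 (Finset.Icc (j + 1) (2 * n + 1))) : ℕ) : ℝ) := by
      calc ((n : ℝ)) ^ 2 = ((n ^ 2 : ℕ) : ℝ) := by push_cast; ring
        _ ≤ _ := by exact_mod_cast hmin
    calc (1 : ℝ) / 9 = (1 / (9 * (n : ℝ) ^ 2)) * ((n : ℝ) ^ 2) := by
          have : ((n : ℝ)) ≠ 0 := by positivity
          field_simp
      _ ≤ _ := mul_le_mul_of_nonneg_left hS (by positivity)
  constructor
  · intro j hj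
    simp only [Finset.mem_insert, Finset.mem_singleton] at hj
    rcases hj with rfl | rfl
    · exact hnear _ (le_refl _) (by omega)
    · exact hnear _ (by omega) (le_refl _)
  · apply le_antisymm
    · apply le_min
      · exact Finset.inf'_le _ (Finset.mem_Icc.mpr ⟨Nat.zero_le _, by omega⟩)
      · exact Finset.inf'_le _ (Finset.mem_Icc.mpr ⟨Nat.zero_le _, by omega⟩)
    · rw [Finset.le_inf'_iff]
      intro j hj
      by_cases h1 : j = 2 * i - 1
      · subst h1; exact min_le_left _ _
      by_cases h2 : j = 2 * i
      · subst h2; exact min_le_right _ _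
      · calc min (Lmis (2 * n + 1) D (2 * i - 1)) (Lmis (2 * n + 1) D (2 * i))
            ≤ Lmis (2 * n + 1) D (2 * i - 1) := min_le_left _ _
          _ ≤ 1 / 9 := (hnear _ (le_refl _) (by omega)).1
          _ ≤ Lmis (2 * n + 1) D j := hfar j (by omega)
end
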